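/- Let C be a small category and U a subterminal presheaf on C. The full subcategory of Psh(C) spanned by the U-connected presheaves is reflective: the inclusion functor has a left adjoint whose value on a presheaf X is the pushout of the span X ⟵ X × U ⟶ U formed by the two product projections. -/

import Mathlib

open CategoryTheory CategoryTheory.Limits MonoidalCategory

universe u

variable {C : Type u} [SmallCategory C]

/-- A presheaf `X` is `U`-connected when the projection `X × U ⟶ U` is an
isomorphism. -/
def IsConnectedAlong (U X : Cᵒᵖ ⥤ Type u) : Prop :=
  IsIso (CartesianMonoidalCategory.snd X U)

/-- The `U`-connected reflection of `X`: the pushout of the span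
`X ⟵ X × U ⟶ U` formed by the two product projections. -/
noncomputable def connReflection (U X : Cᵒᵖ ⥤ Type u) : Cᵒᵖ ⥤ Type u :=
  pushout (CartesianMonoidalCategory.fst X U) (CartesianMonoidalCategory.snd X U)

/-- The unit `X ⟶ Cl(X)` of the `U`-connected reflection: the coprojection
into the pushout. -/
noncomputable def connUnit (U X : Cᵒᵖ ⥤ Type u) : X ⟶ connReflection U X :=
  pushout.inl (CartesianMonoidalCategory.fst X U) (CartesianMonoidalCategory.snd X U)

section Aux

open CartesianMonoidalCategory

set_option synthInstance.maxHeartbeats 800000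
set_option maxHeartbeats 1000000

/-- Any two maps from `U` into a `U`-connected presheaf agree. -/
lemma conn_hom_unique' {U Y : Cᵒᵖ ⥤ Type u} (hY : IsIso (snd Y U)) (a b : U ⟶ Y) : a = b := by
  have h : lift a (𝟙 U) = lift b (𝟙 U) := by
    rw [← cancel_mono (snd Y U)]; simp
  have := congrArg (fun t => t ≫ fst Y U) h
  simpa using this

lemma conn_key' (U X : Cᵒᵖ ⥤ Type u) (hU : IsSubterminal U) :
    snd (pushout (fst X U) (snd X U)) U ≫ pushout.inr (fst X U) (snd X U)
      = fst (pushout (fst X U) (snd X U)) U := by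
  set L := pushout (fst X U) (snd X U) with hL
  have hP : IsPushout (fst X U) (snd X U) (pushout.inl _ _) (pushout.inr _ _) :=
    IsPushout.of_hasPushout _ _
  have hP' := hP.map (tensorLeft U)
  simp only [curriedTensor_obj_obj, curriedTensor_obj_map] at hP'
  have : (β_ U L).hom ≫ snd L U ≫ pushout.inr (fst X U) (snd X U)
      = (β_ U L).hom ≫ fst L U := by
    apply hP'.hom_ext
    · simp [pushout.condition]
      rw [whiskerLeft_fst_assoc, whiskerLeft_snd]
      have h := congrArg ((β_ U X).hom ≫ ·) (pushout.condition (f := fst X U) (g := snd X U))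
      simpa using h.symm
    · have := hU (fst U U) (snd U U)
      simp [this]
      rw [whiskerLeft_fst_assoc, whiskerLeft_snd, this]
  exact (cancel_epi (β_ U L).hom).1 this

/-- Let `C` be a small category and `U` a subterminal presheaf on `C`.
The full subcategory of `Psh(C)` spanned by the `U`-connected presheaves is
reflective: the reflection of `X` is the pushout of the span `X ⟵ X × U ⟶ U` of the
two product projections, with unit the coprojection `X ⟶ Cl(X)`.  Concretely, `Cl(X)`
is `U`-connected, and every map from `X` to a `U`-connected presheaf factors uniquely
through the coprojection `X ⟶ Cl(X)`. -/
theorem connected_reflective (U : Cᵒᵖ ⥤ Type u) (hU : IsSubterminal U) :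
    ∀ X : Cᵒᵖ ⥤ Type u,
      IsConnectedAlong U (connReflection U X) ∧
      ∀ (Y : Cᵒᵖ ⥤ Type u), IsConnectedAlong U Y →
        ∀ f : X ⟶ Y, ∃! g : connReflection U X ⟶ Y, connUnit U X ≫ g = f := by

  intro X
  constructor
  · rw [IsConnectedAlong, connReflection]
    refine ⟨⟨CartesianMonoidalCategory.lift (pushout.inr _ _) (𝟙 U), ?_, ?_⟩⟩
    · apply CartesianMonoidalCategory.hom_ext
      · simpa using conn_key' U X hU
      · simp
    · simp
  · intro Y hY f
    rw [IsConnectedAlong] at hY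
    haveI : IsIso (CartesianMonoidalCategory.snd Y U) := hY
    open CartesianMonoidalCategory in
    set u : U ⟶ Y := inv (snd Y U) ≫ fst Y U with hu
    open CartesianMonoidalCategory in
    have h1 : (f ▷ U) = snd X U ≫ inv (snd Y U) := by
      rw [← cancel_mono (snd Y U)]; simp
    open CartesianMonoidalCategory in
    have hcomm : fst X U ≫ f = snd X U ≫ u := by
      calc fst X U ≫ f = (f ▷ U) ≫ fst Y U := by simp
        _ = snd X U ≫ inv (snd Y U) ≫ fst Y U := by rw [h1, Category.assoc]
        _ = snd X U ≫ u := by rw [hu]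
    refine ⟨pushout.desc f u hcomm, by exact pushout.inl_desc _ _ _, ?_⟩
    intro g hg
    apply pushout.hom_ext
    · rw [pushout.inl_desc]
      exact hg
    · rw [pushout.inr_desc]
      exact conn_hom_unique' hY _ _

end Aux
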